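/- For the prism over the complete graph, K_n □ K₂ (n ≥ 2), the independence number equals 2 while the indicated domination number equals n; hence γᵢ(G) − α(G) can be arbitrarily large. -/

import Mathlib

open Finset

open scoped Classical

noncomputable section

namespace IndicatedDom

variable {V : Type*} [Fintype V]

/-- Closed neighborhood `N[v]` as a `Finset`. -/
def cnbhd (G : SimpleGraph V) (v : V) : Finset V :=
  insert v (G.neighborFinset v)

/-- `D` is a dominating set of `G`. -/
def Dominates (G : SimpleGraph V) (D : Finset V) : Prop :=
  ∀ u, ∃ v ∈ D, u ∈ cnbhd G v

/-- The set of vertices not dominated by `D`. -/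
def undom (G : SimpleGraph V) (D : Finset V) : Finset V :=
  univ.filter fun u => ∀ v ∈ D, u ∉ cnbhd G v

/-- Game value of the indicated domination game with a fuel parameter:
given the set `D` of vertices selected so far, Dominator indicates an
undominated vertex `u` (minimizing), Staller selects a vertex of `N[u]`
(maximizing); each selection counts one. -/
def giAux (G : SimpleGraph V) : ℕ → Finset V → ℕ
  | 0, _ => 0
  | (fuel+1), D =>
    if h : (undom G D).Nonempty then
      (undom G D).inf' h fun u =>
        (cnbhd G u).sup' ⟨u, Finset.mem_insert_self u _⟩ fun v => giAux G fuel (insert v D) + 1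
    else 0

/-- The indicated domination number `γᵢ(G)`. -/
def indicatedDomNum (G : SimpleGraph V) : ℕ :=
  giAux G (Fintype.card V) ∅

/-- Game value of the standard domination game with a fuel parameter:
`dom = true` means it is Dominator's turn (minimizing); legal moves are
vertices dominating at least one new vertex. -/
def gameAux (G : SimpleGraph V) : ℕ → Bool → Finset V → ℕ
  | 0, _, _ => 0
  | (fuel+1), dom, D =>
    if h : (univ.filter fun v => ∃ u ∈ cnbhd G v, u ∈ undom G D).Nonempty then
      if dom then
        (univ.filter fun v => ∃ u ∈ cnbhd G v, u ∈ undom G D).inf' h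
          fun v => gameAux G fuel false (insert v D) + 1
      else
        (univ.filter fun v => ∃ u ∈ cnbhd G v, u ∈ undom G D).sup' h
          fun v => gameAux G fuel true (insert v D) + 1
    else 0

/-- The game domination number `γ_g(G)` (Dominator starts). -/
def gameDomNum (G : SimpleGraph V) : ℕ :=
  gameAux G (Fintype.card V) true ∅

/-- A minimal dominating set. -/
def IsMinimalDominating (G : SimpleGraph V) (D : Finset V) : Prop :=
  Dominates G D ∧ ∀ D' ⊂ D, ¬ Dominates G D'

/-- The upper domination number `Γ(G)`. -/
def upperDomNum (G : SimpleGraph V) : ℕ :=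
  sSup {k | ∃ D : Finset V, IsMinimalDominating G D ∧ D.card = k}

/-- A dominating (Grundy) sequence: every vertex dominates something new,
and the whole sequence dominates `G`. -/
def IsDominatingSeq (G : SimpleGraph V) (l : List V) : Prop :=
  (∀ i : Fin l.length, ∃ u, u ∈ cnbhd G (l.get i) ∧
      ∀ j : Fin l.length, (j : ℕ) < (i : ℕ) → u ∉ cnbhd G (l.get j)) ∧
    Dominates G l.toFinset

/-- The Grundy domination number `γ_gr(G)`. -/
def grundyDomNum (G : SimpleGraph V) : ℕ :=
  sSup {k | ∃ l : List V, IsDominatingSeq G l ∧ l.length = k}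

/-- The independence number `α(G)`. -/
def indepNum (G : SimpleGraph V) : ℕ :=
  sSup {k | ∃ S : Finset V, (∀ x ∈ S, ∀ y ∈ S, ¬ G.Adj x y) ∧ S.card = k}

/-- `S` is irredundant: every `x ∈ S` has a private neighbor w.r.t. `S`. -/
def Irredundant (G : SimpleGraph V) (S : Finset V) : Prop :=
  ∀ x ∈ S, ∃ w, (∃ v ∈ S, w ∈ cnbhd G v) ∧ ¬ ∃ v ∈ S.erase x, w ∈ cnbhd G v

/-- The upper irredundance number `IR(G)`. -/
def upperIrredNum (G : SimpleGraph V) : ℕ :=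
  sSup {k | ∃ S : Finset V, Irredundant G S ∧ (∀ T, S ⊂ T → ¬ Irredundant G T) ∧ S.card = k}

/-- The star `K_{1,n}` with center `0`. -/
def starGraph (n : ℕ) : SimpleGraph (Fin (n+1)) where
  Adj a b := a ≠ b ∧ (a = 0 ∨ b = 0)
  symm := by constructor; intro a b h; exact ⟨h.1.symm, h.2.symm⟩
  loopless := by constructor; intro a h; exact h.1 rfl

/-- Two copies of `K_n` with a matching joining corresponding vertices of
index `≥ 1` (i.e. `K_n □ K₂` minus the matching edge at index `0`). -/
def Hgraph (n : ℕ) : SimpleGraph (Fin n × Bool) where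
  Adj a b := (a.2 = b.2 ∧ a.1 ≠ b.1) ∨ (a.2 ≠ b.2 ∧ a.1 = b.1 ∧ (a.1 : ℕ) ≠ 0)
  symm := by
    constructor
    rintro ⟨i, s⟩ ⟨j, t⟩ (⟨h1, h2⟩ | ⟨h1, h2, h3⟩)
    · exact Or.inl ⟨h1.symm, h2.symm⟩
    · exact Or.inr ⟨h1.symm, h2.symm, h2 ▸ h3⟩
  loopless := by constructor; rintro ⟨i, s⟩ (⟨_, h⟩ | ⟨h, _⟩) <;> exact h rfl

/-- The `k`-th power of the path on `n` vertices: `i ~ j` iff `1 ≤ |i-j| ≤ k`. -/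
def pathPow (n k : ℕ) : SimpleGraph (Fin n) where
  Adj i j := i ≠ j ∧ (i : ℕ) ≤ (j : ℕ) + k ∧ (j : ℕ) ≤ (i : ℕ) + k
  symm := by constructor; intro i j h; exact ⟨h.1.symm, h.2.2, h.2.1⟩
  loopless := by constructor; intro i h; exact h.1 rfl

/-- The cycle on `m` vertices (for `m ≥ 3`), modeled on `ZMod m`. -/
def cyc (m : ℕ) : SimpleGraph (ZMod m) where
  Adj i j := i ≠ j ∧ (i + 1 = j ∨ j + 1 = i)
  symm := by constructor; intro i j h; exact ⟨h.1.symm, h.2.symm⟩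
  loopless := by constructor; intro i h; exact h.1 rfl

/-- The graph `D₁`: a `9`-cycle `x₁x₂…x₉` plus chords `x₁x₃, x₄x₆, x₇x₉`
(vertex `xᵢ` is represented by `i - 1 : ZMod 9`). -/
def DGraph : SimpleGraph (ZMod 9) where
  Adj i j := i ≠ j ∧ (i + 1 = j ∨ j + 1 = i ∨
    (i = 0 ∧ j = 2) ∨ (i = 2 ∧ j = 0) ∨ (i = 3 ∧ j = 5) ∨ (i = 5 ∧ j = 3) ∨
    (i = 6 ∧ j = 8) ∨ (i = 8 ∧ j = 6))
  symm := by constructor; intro i j h; refine ⟨h.1.symm, ?_⟩; tauto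
  loopless := by constructor; intro i h; exact h.1 rfl



local notation "PG" n =>
  SimpleGraph.boxProd (⊤ : SimpleGraph (Fin n)) (⊤ : SimpleGraph (Fin 2))

lemma mem_cnbhd {G : SimpleGraph V} {u v : V} :
    u ∈ cnbhd G v ↔ u = v ∨ G.Adj v u := by
  simp [cnbhd]

lemma mem_cnbhd_comm {G : SimpleGraph V} {u v : V} :
    u ∈ cnbhd G v ↔ v ∈ cnbhd G u := by
  simp only [mem_cnbhd]
  constructor
  · rintro (rfl | h)
    · exact Or.inl rfl
    · exact Or.inr h.symm
  · rintro (rfl | h)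
    · exact Or.inl rfl
    · exact Or.inr h.symm

lemma mem_undom {G : SimpleGraph V} {D : Finset V} {u : V} :
    u ∈ undom G D ↔ ∀ v ∈ D, u ∉ cnbhd G v := by
  simp [undom]

lemma giAux_le_card (G : SimpleGraph V) :
    ∀ fuel (D : Finset V), giAux G fuel D ≤ (undom G D).card := by
  intro fuel
  induction fuel with
  | zero => intro D; simp [giAux]
  | succ k ih =>
    intro D
    rw [giAux]
    split_ifs with h
    · have h' := h
      obtain ⟨u, hu⟩ := h'
      refine le_trans (Finset.inf'_le _ hu) ?_
      apply Finset.sup'_le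
      intro v hv
      have hsub : undom G (insert v D) ⊆ (undom G D).erase u := by
        intro w hw
        rw [Finset.mem_erase]
        refine ⟨?_, ?_⟩
        · intro hwu
          subst hwu
          exact (mem_undom.mp hw v (Finset.mem_insert_self v D)) (mem_cnbhd_comm.mp hv)
        · rw [mem_undom]
          intro x hx
          exact mem_undom.mp hw x (Finset.mem_insert_of_mem hx)
      have h1 := ih (insert v D)
      have h2 := Finset.card_le_card hsub
      rw [Finset.card_erase_of_mem hu] at h2
      have hpos : 0 < (undom G D).card := Finset.card_pos.mpr ⟨u, hu⟩
      omega
    · simp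

lemma mem_cnbhd_prism {n : ℕ} {u v : Fin n × Fin 2} :
    u ∈ cnbhd (PG n) v ↔ u.1 = v.1 ∨ u.2 = v.2 := by
  rw [mem_cnbhd]
  constructor
  · rintro (rfl | h)
    · exact Or.inl rfl
    · rw [SimpleGraph.boxProd_adj] at h
      rcases h with ⟨h1, h2⟩ | ⟨h1, h2⟩
      · exact Or.inr h2.symm
      · exact Or.inl h2.symm
  · intro h
    by_cases huv : u = v
    · exact Or.inl huv
    · right
      rw [SimpleGraph.boxProd_adj]
      rcases h with h | h
      · right
        refine ⟨?_, h.symm⟩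
        simp only [SimpleGraph.top_adj]
        intro h2
        exact huv (Prod.ext h h2.symm)
      · left
        refine ⟨?_, h.symm⟩
        simp only [SimpleGraph.top_adj]
        intro h1
        exact huv (Prod.ext h1.symm h)

lemma mem_undom_prism {n : ℕ} {D : Finset (Fin n × Fin 2)} {u : Fin n × Fin 2} :
    u ∈ undom (PG n) D ↔ ∀ v ∈ D, u.1 ≠ v.1 ∧ u.2 ≠ v.2 := by
  simp only [mem_undom, mem_cnbhd_prism]
  push_neg
  rfl

lemma fin2_eq : ∀ a b c : Fin 2, a ≠ c → b ≠ c → a = b := by decide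

lemma card_undom_single {n : ℕ} {E : Finset (Fin n × Fin 2)} (v : Fin n × Fin 2)
    (hE : ∀ x, x ∈ E ↔ x = v) :
    (undom (PG n) E).card = n - 1 := by
  have h : undom (PG n) E = (Finset.univ.erase v.1) ×ˢ (Finset.univ.erase v.2) := by
    ext u
    simp [mem_undom_prism, Finset.mem_product, Finset.mem_erase, hE, and_comm]
  rw [h, Finset.card_product, Finset.card_erase_of_mem (Finset.mem_univ _),
    Finset.card_erase_of_mem (Finset.mem_univ _), Finset.card_univ, Finset.card_univ,
    Fintype.card_fin, Fintype.card_fin]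
  norm_num

lemma undom_insert_key {n : ℕ} {D E : Finset (Fin n × Fin 2)} {u : Fin n × Fin 2} {b : Fin 2}
    (hD : D.Nonempty) (hrow : ∀ v ∈ D, v.2 = b) (hu : u ∈ undom (PG n) D)
    (hE : ∀ x, x ∈ E ↔ x = (u.1, b) ∨ x ∈ D) :
    undom (PG n) E = (undom (PG n) D).erase u := by
  have hub : u.2 ≠ b := by
    obtain ⟨v0, hv0⟩ := hD
    have h2 := (mem_undom_prism.mp hu) v0 hv0
    rw [hrow v0 hv0] at h2
    exact h2.2
  ext w
  constructor
  · intro hw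
    rw [Finset.mem_erase, mem_undom_prism]
    have hwv := mem_undom_prism.mp hw (u.1, b) ((hE _).mpr (Or.inl rfl))
    have hwD : ∀ x ∈ D, w.1 ≠ x.1 ∧ w.2 ≠ x.2 :=
      fun x hx => mem_undom_prism.mp hw x ((hE _).mpr (Or.inr hx))
    refine ⟨?_, hwD⟩
    intro hwu
    rw [hwu] at hwv
    exact hwv.1 rfl
  · intro hw
    rw [Finset.mem_erase, mem_undom_prism] at hw
    rw [mem_undom_prism]
    intro x hx
    rcases (hE x).mp hx with rfl | hxD
    · have hwb : w.2 ≠ b := by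
        obtain ⟨v0, hv0⟩ := hD
        have h2 := hw.2 v0 hv0
        rw [hrow v0 hv0] at h2
        exact h2.2
      refine ⟨?_, hwb⟩
      intro h1
      exact hw.1 (Prod.ext h1 (fin2_eq w.2 u.2 b hwb hub))
    · exact hw.2 x hxD

lemma giAux_lower {n : ℕ} :
    ∀ fuel (D : Finset (Fin n × Fin 2)) (b : Fin 2), D.Nonempty → (∀ v ∈ D, v.2 = b) →
      min fuel (undom (PG n) D).card ≤ giAux (PG n) fuel D := by
  intro fuel
  induction fuel with
  | zero => intro D b _ _; simp [giAux]
  | succ k ih =>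
    intro D b hD hrow
    rw [giAux]
    split_ifs with h
    · apply Finset.le_inf'
      intro u hu
      have hvmem : (u.1, b) ∈ cnbhd (PG n) u := mem_cnbhd_prism.mpr (Or.inl rfl)
      refine le_trans ?_ (Finset.le_sup' _ hvmem)
      refine le_trans ?_ (Nat.add_le_add_right (ih _ b ?_ ?_) 1)
      · conv_rhs => rw [undom_insert_key hD hrow hu
          (fun x => @Finset.mem_insert _ (fun a b => Classical.propDecidable (a = b)) _ _ _)]
        rw [Finset.card_erase_of_mem hu]
        have hpos : 0 < (undom (PG n) D).card := Finset.card_pos.mpr ⟨u, hu⟩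
        omega
      · exact ⟨(u.1, b), @Finset.mem_insert_self _ (fun a b => Classical.propDecidable (a = b)) _ _⟩
      · intro x hx
        rcases (@Finset.mem_insert _ (fun a b => Classical.propDecidable (a = b)) _ _ _).mp hx with rfl | hxD
        · rfl
        · exact hrow x hxD
    · rw [Finset.not_nonempty_iff_eq_empty] at h
      rw [h]
      simp

/-- for the prism `K_n □ K₂` (`n ≥ 2`),
`α = 2` while `γᵢ = n`. -/
theorem stmt19 (n : ℕ) (hn : 2 ≤ n) :
    indepNum ((⊤ : SimpleGraph (Fin n)).boxProd (⊤ : SimpleGraph (Fin 2))) = 2 ∧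
      indicatedDomNum ((⊤ : SimpleGraph (Fin n)).boxProd (⊤ : SimpleGraph (Fin 2))) = n := by
  constructor
  · -- independence number = 2
    have hA : ∀ k ∈ {k | ∃ S : Finset (Fin n × Fin 2),
        (∀ x ∈ S, ∀ y ∈ S, ¬ (PG n).Adj x y) ∧ S.card = k}, k ≤ 2 := by
      rintro k ⟨S, hS, rfl⟩
      have hle : S.card ≤ (Finset.univ : Finset (Fin 2)).card := by
        apply Finset.card_le_card_of_injOn Prod.snd (fun x _ => Finset.mem_univ _)
        intro x hx y hy hxy
        by_contra hne
        have h1 : x.1 ≠ y.1 := fun h => hne (Prod.ext h hxy)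
        exact hS x (Finset.mem_coe.mp hx) y (Finset.mem_coe.mp hy)
          (SimpleGraph.boxProd_adj.mpr (Or.inl ⟨h1, hxy⟩))
      simpa using hle
    have h2 : (2 : ℕ) ∈ {k | ∃ S : Finset (Fin n × Fin 2),
        (∀ x ∈ S, ∀ y ∈ S, ¬ (PG n).Adj x y) ∧ S.card = k} := by
      refine ⟨{((⟨0, by omega⟩ : Fin n), (0 : Fin 2)), ((⟨1, by omega⟩ : Fin n), (1 : Fin 2))},
        ?_, ?_⟩
      · intro x hx y hy
        fin_cases hx <;> fin_cases hy <;>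
          simp [SimpleGraph.boxProd_adj, Prod.ext_iff, Fin.ext_iff]
      · rw [Finset.card_insert_of_notMem (by simp [Prod.ext_iff, Fin.ext_iff]),
          Finset.card_singleton]
    exact le_antisymm (csSup_le ⟨2, h2⟩ hA) (le_csSup ⟨2, hA⟩ h2)
  · -- indicated domination number = n
    have hcard : Fintype.card (Fin n × Fin 2) = n * 2 := by simp
    unfold indicatedDomNum
    rw [hcard]
    obtain ⟨m, hm⟩ : ∃ m, n * 2 = m + 1 := ⟨n * 2 - 1, by omega⟩
    rw [hm, giAux]
    have hne : (undom (PG n) ∅).Nonempty :=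
      ⟨((⟨0, by omega⟩ : Fin n), (0 : Fin 2)), by simp [undom]⟩
    rw [dif_pos hne]
    apply le_antisymm
    · refine le_trans (Finset.inf'_le _
        (show ((⟨0, by omega⟩ : Fin n), (0 : Fin 2)) ∈ undom (PG n) ∅ from by simp [undom])) ?_
      apply Finset.sup'_le
      intro v hv
      refine le_trans (Nat.add_le_add_right (giAux_le_card _ m _) 1) ?_
      rw [card_undom_single v]
      · omega
      · intro x
        exact Iff.trans (@Finset.mem_insert _ (fun a b => Classical.propDecidable (a = b)) _ _ _) (by simp)
    · apply Finset.le_inf'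
      intro u hu
      refine le_trans ?_ (Finset.le_sup' _ (mem_cnbhd.mpr (Or.inl rfl)))
      refine le_trans ?_ (Nat.add_le_add_right (giAux_lower m _ u.2 ?_ ?_) 1)
      · rw [card_undom_single u]
        · omega
        · intro x
          exact Iff.trans (@Finset.mem_insert _ (fun a b => Classical.propDecidable (a = b)) _ _ _) (by simp)
      · exact ⟨u, @Finset.mem_insert_self _ (fun a b => Classical.propDecidable (a = b)) _ _⟩
      · intro x hx
        rcases (@Finset.mem_insert _ (fun a b => Classical.propDecidable (a = b)) _ _ _).mp hx with rfl | hx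
        · rfl
        · exact absurd hx (Finset.notMem_empty x)


end IndicatedDom
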